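/- Let $p_t:\mathbb{R}^d\to[0,\infty)$, $t>0$, be a family of probability densities satisfying $p_t * p_s = p_{t+s}$, each radial and radially nonincreasing, with $\sup_{y\in B(0,\rho)^c} p_t(y) < \infty$ for every $\rho>0$ and $t>0$. Then for each $t>0$ the function $x \mapsto \int_{\mathbb{R}^d} p_{t/2}(x-y)p_{t/2}(y)\,dy$ is continuous on $\mathbb{R}^d\setminus\{0\}$. -/

import Mathlib

open MeasureTheory Filter Set Metric
open scoped ENNReal

lemma cont_conv_aux {d : ℕ} {f v : EuclideanSpace ℝ (Fin d) → ℝ}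
    (hf : Integrable f) (hv : AEStronglyMeasurable v volume) {M : ℝ}
    (hvM : ∀ y, |v y| ≤ M) :
    Continuous fun x : EuclideanSpace ℝ (Fin d) => ∫ y, f (x - y) * v y := by
  haveI : Fact ((1:ℝ≥0∞) ≤ 1) := ⟨le_refl _⟩
  have hM : 0 ≤ M := le_trans (abs_nonneg _) (hvM 0)
  let Φ : C(EuclideanSpace ℝ (Fin d) × EuclideanSpace ℝ (Fin d), EuclideanSpace ℝ (Fin d)) :=
    ⟨fun q => q.1 - q.2, by fun_prop⟩
  have hmp : ∀ x : EuclideanSpace ℝ (Fin d), MeasurePreserving (Φ.curry x) volume volume :=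
    fun x => Measure.measurePreserving_sub_left volume x
  let fL : Lp ℝ 1 (volume : Measure (EuclideanSpace ℝ (Fin d))) := hf.toL1 f
  let T : EuclideanSpace ℝ (Fin d) → Lp ℝ 1 (volume : Measure (EuclideanSpace ℝ (Fin d))) :=
    fun x => Lp.compMeasurePreserving (Φ.curry x) (hmp x) fL
  have hT : Continuous T :=
    Continuous.compMeasurePreservingLp continuous_const (map_continuous Φ.curry) hmp
      (by norm_num)
  have hTx : ∀ x : EuclideanSpace ℝ (Fin d),
      (T x : EuclideanSpace ℝ (Fin d) → ℝ) =ᵐ[volume] fun y => f (x - y) := by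
    intro x
    refine (Lp.coeFn_compMeasurePreserving fL (hmp x)).trans ?_
    exact (hmp x).quasiMeasurePreserving.ae_eq_comp (hf.coeFn_toL1)
  have hcomp : ∀ x : EuclideanSpace ℝ (Fin d), Integrable fun y => f (x - y) := fun x =>
    hf.comp_sub_left x
  have hInt : ∀ x : EuclideanSpace ℝ (Fin d), Integrable fun y => f (x - y) * v y := by
    intro x
    have h1 : Integrable fun y => v y * f (x - y) :=
      (hcomp x).bdd_mul hv (Eventually.of_forall fun y => (Real.norm_eq_abs _).symm ▸ hvM y)
    exact h1.congr (Eventually.of_forall fun y => by dsimp only; exact mul_comm _ _)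
  rw [continuous_iff_continuousAt]
  intro x₀
  rw [ContinuousAt, tendsto_iff_norm_sub_tendsto_zero]
  have key : ∀ x : EuclideanSpace ℝ (Fin d), ‖(∫ y, f (x - y) * v y) - ∫ y, f (x₀ - y) * v y‖
      ≤ M * ‖T x - T x₀‖ := by
    intro x
    rw [← integral_sub (hInt x) (hInt x₀)]
    simp only [← sub_mul]
    calc ‖∫ y, (f (x - y) - f (x₀ - y)) * v y‖
        ≤ ∫ y, ‖(f (x - y) - f (x₀ - y)) * v y‖ := norm_integral_le_integral_norm _
      _ ≤ ∫ y, M * ‖f (x - y) - f (x₀ - y)‖ := by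
          refine integral_mono_of_nonneg (Eventually.of_forall fun y => norm_nonneg _)
            (((hcomp x).sub (hcomp x₀)).norm.const_mul M) (Eventually.of_forall fun y => ?_)
          dsimp only
          rw [norm_mul, mul_comm]
          exact mul_le_mul_of_nonneg_right ((Real.norm_eq_abs _).symm ▸ hvM y) (norm_nonneg _)
      _ = M * ∫ y, ‖f (x - y) - f (x₀ - y)‖ := integral_const_mul M _
      _ = M * ‖T x - T x₀‖ := by
          congr 1
          rw [L1.norm_eq_integral_norm]
          refine integral_congr_ae ?_
          filter_upwards [Lp.coeFn_sub (T x) (T x₀), hTx x, hTx x₀] with y h1 h2 h3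
          rw [h1]; simp [h2, h3]
  refine squeeze_zero_norm (fun x => le_trans (le_of_eq (norm_norm _)) (key x)) ?_
  have h0 : Tendsto (fun x => M * ‖T x - T x₀‖) (nhds x₀) (nhds (M * ‖T x₀ - T x₀‖)) :=
    (((hT.tendsto x₀).sub tendsto_const_nhds).norm).const_mul M
  simpa using h0

lemma cont_conv_aux' {d : ℕ} {f v : EuclideanSpace ℝ (Fin d) → ℝ}
    (hf : Integrable f) (hv : AEStronglyMeasurable v volume) {M : ℝ}
    (hvM : ∀ y, |v y| ≤ M) (x : EuclideanSpace ℝ (Fin d)) :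
    Integrable fun y => f (x - y) * v y := by
  have h1 : Integrable fun y => v y * f (x - y) :=
    (hf.comp_sub_left x).bdd_mul hv (Eventually.of_forall fun y => (Real.norm_eq_abs _).symm ▸ hvM y)
  exact h1.congr (Eventually.of_forall fun y => by dsimp only; exact mul_comm _ _)

theorem convolution_square_continuous_away_from_origin
    {d : ℕ} (hd : 1 ≤ d)
    (p : ℝ → EuclideanSpace ℝ (Fin d) → ℝ)
    (hnn : ∀ t > (0:ℝ), ∀ x, 0 ≤ p t x)
    (hint : ∀ t > (0:ℝ), Integrable (p t))
    (hprob : ∀ t > (0:ℝ), ∫ x, p t x = 1)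
    (hsemi : ∀ t > (0:ℝ), ∀ s > (0:ℝ), ∀ x : EuclideanSpace ℝ (Fin d),
      ∫ y, p t (x - y) * p s y = p (t + s) x)
    (hrad : ∀ t > (0:ℝ), ∀ x y : EuclideanSpace ℝ (Fin d), ‖x‖ = ‖y‖ → p t x = p t y)
    (hmono : ∀ t > (0:ℝ), ∀ x y : EuclideanSpace ℝ (Fin d), ‖x‖ ≤ ‖y‖ → p t y ≤ p t x)
    (hbdd : ∀ ρ > (0:ℝ), ∀ t > (0:ℝ), ∃ M : ℝ, ∀ y : EuclideanSpace ℝ (Fin d),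
      ρ ≤ ‖y‖ → p t y ≤ M) :
    ∀ t > (0:ℝ), ContinuousOn
      (fun x : EuclideanSpace ℝ (Fin d) => ∫ y, p (t / 2) (x - y) * p (t / 2) y)
      {x | x ≠ 0} := by
  classical
  intro t ht
  set τ := t / 2 with hτdef
  have hτ : 0 < τ := by positivity
  set q := p τ with hq
  have hq_int : Integrable q := hint τ hτ
  have hq_nn : ∀ y, 0 ≤ q y := hnn τ hτ
  intro x₀ hx₀
  have hx₀' : x₀ ≠ 0 := hx₀
  have hnx₀ : 0 < ‖x₀‖ := norm_pos_iff.mpr hx₀'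
  set ρ := ‖x₀‖ / 4 with hρdef
  have hρ : 0 < ρ := by positivity
  obtain ⟨M, hM⟩ := hbdd ρ hρ τ hτ
  set M' := max M 0 with hM'def
  set u := (Metric.ball (0 : EuclideanSpace ℝ (Fin d)) ρ).indicator q with hu
  set v := (Metric.ball (0 : EuclideanSpace ℝ (Fin d)) ρ)ᶜ.indicator q with hv
  have huv : ∀ y, u y + v y = q y := fun y => by
    simp only [hu, hv]
    rw [Set.indicator_apply, Set.indicator_apply]
    by_cases h : y ∈ Metric.ball (0 : EuclideanSpace ℝ (Fin d)) ρ <;>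
      simp [h]
  have hu_int : Integrable u := hq_int.indicator measurableSet_ball
  have hv_int : Integrable v := hq_int.indicator measurableSet_ball.compl
  have hv_meas : AEStronglyMeasurable v volume :=
    hq_int.aestronglyMeasurable.indicator measurableSet_ball.compl
  have hu_meas : AEStronglyMeasurable u volume :=
    hq_int.aestronglyMeasurable.indicator measurableSet_ball
  have hvM : ∀ y, |v y| ≤ M' := by
    intro y
    rw [hv, Set.indicator_apply]
    by_cases h : y ∈ (Metric.ball (0 : EuclideanSpace ℝ (Fin d)) ρ)ᶜ
    · simp only [h, if_pos]
      rw [abs_of_nonneg (hq_nn y)]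
      refine le_trans (hM y ?_) (le_max_left _ _)
      simpa [dist_eq_norm] using h
    · simp [h]
      exact le_max_right M 0
  -- continuity of the pieces
  have hB : Continuous fun x => ∫ y, u (x - y) * v y := cont_conv_aux hu_int hv_meas hvM
  have hD : Continuous fun x => ∫ y, v (x - y) * v y := cont_conv_aux hv_int hv_meas hvM
  have hCeq : (fun x => ∫ y, v (x - y) * u y) = fun x => ∫ y, u (x - y) * v y := by
    funext x
    have h := integral_sub_left_eq_self (fun y => v (x - y) * u y)
      (volume : Measure (EuclideanSpace ℝ (Fin d))) x
    simp only [sub_sub_cancel] at h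
    rw [← h]
    exact integral_congr_ae (Eventually.of_forall fun y => by dsimp only; exact mul_comm _ _)
  have hC : Continuous fun x => ∫ y, v (x - y) * u y := by rw [hCeq]; exact hB
  have hH : Continuous fun x =>
      (∫ y, u (x - y) * v y) + ((∫ y, v (x - y) * u y) + ∫ y, v (x - y) * v y) :=
    hB.add (hC.add hD)
  -- agreement near x₀
  have hS_open : IsOpen {x : EuclideanSpace ℝ (Fin d) | 2 * ρ < ‖x‖} :=
    isOpen_lt continuous_const continuous_norm
  have hx₀S : x₀ ∈ {x : EuclideanSpace ℝ (Fin d) | 2 * ρ < ‖x‖} := by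
    simp only [Set.mem_setOf_eq, hρdef]; linarith
  have hagree : ∀ x ∈ {x : EuclideanSpace ℝ (Fin d) | 2 * ρ < ‖x‖},
      (∫ y, q (x - y) * q y)
        = (∫ y, u (x - y) * v y) + ((∫ y, v (x - y) * u y) + ∫ y, v (x - y) * v y) := by
    intro x hx
    have hxn : 2 * ρ < ‖x‖ := hx
    have hpt : ∀ y, q (x - y) * q y
        = u (x - y) * v y + (v (x - y) * u y + v (x - y) * v y) := by
      intro y
      have huu : u (x - y) * u y = 0 := by
        by_cases h1 : x - y ∈ Metric.ball (0 : EuclideanSpace ℝ (Fin d)) ρ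
        · by_cases h2 : y ∈ Metric.ball (0 : EuclideanSpace ℝ (Fin d)) ρ
          · exfalso
            have e1 : ‖x - y‖ < ρ := by simpa [dist_eq_norm] using h1
            have e2 : ‖y‖ < ρ := by simpa [dist_eq_norm] using h2
            have : ‖x‖ ≤ ‖x - y‖ + ‖y‖ := by
              simpa using norm_add_le (x - y) y
            linarith
          · rw [hu, Set.indicator_of_notMem h2]; ring
        · rw [hu, Set.indicator_of_notMem h1]; ring
      rw [← huv (x - y), ← huv y]
      linear_combination huu
    rw [integral_congr_ae (Eventually.of_forall fun y => hpt y)]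
    rw [integral_add (cont_conv_aux' hu_int hv_meas hvM x) ?_]
    · rw [integral_add ?_ (cont_conv_aux' hv_int hv_meas hvM x)]
      have hvx : AEStronglyMeasurable (fun y => v (x - y)) volume :=
        hv_meas.comp_quasiMeasurePreserving
          (Measure.measurePreserving_sub_left volume x).quasiMeasurePreserving
      exact hu_int.bdd_mul hvx
        (Eventually.of_forall fun y => (Real.norm_eq_abs _).symm ▸ hvM (x - y))
    · have hvx : AEStronglyMeasurable (fun y => v (x - y)) volume :=
        hv_meas.comp_quasiMeasurePreserving
          (Measure.measurePreserving_sub_left volume x).quasiMeasurePreserving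
      exact (hu_int.bdd_mul hvx
        (Eventually.of_forall fun y => (Real.norm_eq_abs _).symm ▸ hvM (x - y))).add
        (cont_conv_aux' hv_int hv_meas hvM x)
  have hev : (fun x : EuclideanSpace ℝ (Fin d) => ∫ y, q (x - y) * q y)
      =ᶠ[nhds x₀] fun x =>
      (∫ y, u (x - y) * v y) + ((∫ y, v (x - y) * u y) + ∫ y, v (x - y) * v y) :=
    eventually_of_mem (hS_open.mem_nhds hx₀S) hagree
  exact ((hH.continuousAt).congr hev.symm).continuousWithinAt
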